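/- Let a, λ, ν > 0, c ≠ 0, D = (a c + ν + λ)² − 4 a c λ, α1 = (a c + ν + λ − √D)/(2c), α2 = (a c + ν + λ + √D)/(2c), A1 = (a − α1)/√D, A2 = (α2 − a)/√D. Define F : ℝ → ℝ by: if c > 0, F(x) = (A1 e^{−α1 x} + A2 e^{−α2 x}) 1_{x>0}; if c < 0, F(x) = A1 e^{−α1 x} 1_{x>0} − A2 e^{−α2 x} 1_{x<0}. Then for every θ ∈ ℝ, ∫_ℝ e^{iθx} F(x) dx = (a − iθ)/(a λ − iθ(a c + ν + λ) − c θ²). -/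

import Mathlib

open MeasureTheory

section Helpers
open Filter Set Complex

open MeasureTheory Filter Set Complex

lemma myIntegrable {z : ℂ} (hz : z.re < 0) :
    IntegrableOn (fun x : ℝ => Complex.exp (z * x)) (Ioi 0) := by
  apply Integrable.mono' (g := fun x : ℝ => Real.exp (-(-z.re) * x))
  · exact exp_neg_integrableOn_Ioi 0 (by linarith)
  · exact (Complex.continuous_exp.comp (by continuity)).aestronglyMeasurable
  · filter_upwards with x
    rw [Complex.norm_exp]
    simp [Complex.mul_re]

lemma myIntegral {z : ℂ} (hz : z.re < 0) :
    ∫ x in Ioi (0:ℝ), Complex.exp (z * x) = -z⁻¹ := by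
  have hz0 : z ≠ 0 := fun h => by simp [h] at hz
  have hderiv : ∀ x ∈ Ici (0:ℝ), HasDerivAt (fun x : ℝ => Complex.exp (z * x) / z)
      (Complex.exp (z * x)) x := by
    intro x _
    have h1 : HasDerivAt (fun x : ℝ => z * (x:ℂ)) z x := by
      simpa using ((hasDerivAt_id x).ofReal_comp.const_mul z)
    simpa [mul_div_cancel_right₀ _ hz0] using (h1.cexp).div_const z
  have htend : Tendsto (fun x : ℝ => Complex.exp (z * x) / z) atTop (nhds 0) := by
    rw [tendsto_zero_iff_norm_tendsto_zero]
    have : (fun x : ℝ => ‖Complex.exp (z * x) / z‖)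
        = fun x : ℝ => Real.exp (z.re * x) / ‖z‖ := by
      funext x
      rw [norm_div, Complex.norm_exp]
      simp [Complex.mul_re]
    rw [this]
    have h2 : Tendsto (fun x : ℝ => z.re * x) atTop atBot :=
      (tendsto_const_mul_atBot_of_neg hz).mpr tendsto_id
    simpa using (Real.tendsto_exp_atBot.comp h2).div_const ‖z‖
  have := integral_Ioi_of_hasDerivAt_of_tendsto' hderiv (myIntegrable hz) htend
  rw [this]
  simp [div_eq_mul_inv]

lemma myIntegrableIio {w : ℂ} (hw : 0 < w.re) :
    IntegrableOn (fun x : ℝ => Complex.exp (w * x)) (Iio 0) := by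
  have h := myIntegrable (z := -w) (by simpa using hw)
  rw [← (Measure.measurePreserving_neg (volume : Measure ℝ)).integrableOn_comp_preimage
    (Homeomorph.neg ℝ).isClosedEmbedding.measurableEmbedding] at h
  convert h using 1
  · funext x; simp only [Function.comp]; push_cast; ring_nf
  · ext x; simp

lemma myIntegralIio {w : ℂ} (hw : 0 < w.re) :
    ∫ x in Iio (0:ℝ), Complex.exp (w * x) = w⁻¹ := by
  rw [← integral_Iic_eq_integral_Iio]
  have h := integral_comp_neg_Iic (0:ℝ) (fun y : ℝ => Complex.exp (-w * y))
  simp only [neg_zero] at h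
  have h2 : ∫ x in Iic (0:ℝ), Complex.exp (w * x) = ∫ x in Ioi (0:ℝ), Complex.exp (-w * x) := by
    rw [← h]
    congr 1; funext x; push_cast; ring_nf
  rw [h2, myIntegral (by simpa using hw)]
  rw [inv_neg, neg_neg]
open Complex

lemma final_algebra (a lam ν c θ α1 α2 A1 A2 : ℝ)
    (r1 : c * (α1 + α2) = a * c + ν + lam)
    (r2 : c * (α1 * α2) = a * lam)
    (r3 : c * (A1 + A2) = 1)
    (r4 : c * (A1 * α2 + A2 * α1) = a)
    (hc : c ≠ 0) (h1 : α1 ≠ 0) (h2 : α2 ≠ 0) :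
    (A1 : ℂ) * ((α1 : ℂ) - Complex.I * θ)⁻¹ + (A2 : ℂ) * ((α2 : ℂ) - Complex.I * θ)⁻¹
      = ((a : ℂ) - Complex.I * θ)
        / (((a * lam : ℝ) : ℂ) - Complex.I * θ * ((a * c + ν + lam : ℝ) : ℂ)
            - (c : ℂ) * (θ : ℂ) ^ 2) := by
  have hu : (α1 : ℂ) - Complex.I * θ ≠ 0 := by
    intro h
    have := congrArg Complex.re h
    simp at this
    exact h1 this
  have hv : (α2 : ℂ) - Complex.I * θ ≠ 0 := by
    intro h
    have := congrArg Complex.re h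
    simp at this
    exact h2 this
  have hc' : (c : ℂ) ≠ 0 := Complex.ofReal_ne_zero.mpr hc
  have c1 : (c:ℂ) * ((α1:ℂ) + α2) = (a:ℂ) * c + ν + lam := by exact_mod_cast congrArg (Complex.ofReal) r1
  have c2 : (c:ℂ) * ((α1:ℂ) * α2) = (a:ℂ) * lam := by exact_mod_cast congrArg (Complex.ofReal) r2
  have c3 : (c:ℂ) * ((A1:ℂ) + A2) = 1 := by exact_mod_cast congrArg (Complex.ofReal) r3
  have c4 : (c:ℂ) * ((A1:ℂ) * α2 + (A2:ℂ) * α1) = a := by exact_mod_cast congrArg (Complex.ofReal) r4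
  have hden : (((a * lam : ℝ)) : ℂ) - Complex.I * θ * ((a * c + ν + lam : ℝ) : ℂ)
      - (c : ℂ) * (θ : ℂ) ^ 2
      = (c:ℂ) * (((α1:ℂ) - Complex.I * θ) * ((α2:ℂ) - Complex.I * θ)) := by
    push_cast
    linear_combination -c2 + Complex.I * θ * c1 - (c:ℂ) * (θ:ℂ)^2 * Complex.I_sq
  rw [hden, eq_div_iff (mul_ne_zero hc' (mul_ne_zero hu hv))]
  have e1 := inv_mul_cancel₀ hu
  have e2 := inv_mul_cancel₀ hv
  linear_combination ((A1:ℂ) * c * ((α2:ℂ) - Complex.I * θ)) * e1 + ((A2:ℂ) * c * ((α1:ℂ) - Complex.I * θ)) * e2 + c4 - Complex.I * θ * c3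


lemma real_identities (a lam ν c D α1 α2 A1 A2 : ℝ)
    (hD : D = (a * c + ν + lam) ^ 2 - 4 * a * c * lam)
    (hα1 : α1 = (a * c + ν + lam - Real.sqrt D) / (2 * c))
    (hα2 : α2 = (a * c + ν + lam + Real.sqrt D) / (2 * c))
    (hA1 : A1 = (a - α1) / Real.sqrt D)
    (hA2 : A2 = (α2 - a) / Real.sqrt D)
    (hc : c ≠ 0) (hDpos : 0 < D) :
    c * (α1 + α2) = a * c + ν + lam ∧ c * (α1 * α2) = a * lam
      ∧ c * (A1 + A2) = 1 ∧ c * (A1 * α2 + A2 * α1) = a := by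
  have hs : Real.sqrt D ≠ 0 := ne_of_gt (Real.sqrt_pos.mpr hDpos)
  have hs2 : Real.sqrt D ^ 2 = D := Real.sq_sqrt hDpos.le
  refine ⟨?_, ?_, ?_, ?_⟩
  · rw [hα1, hα2]; field_simp; ring
  · have key : (a*c+ν+lam - Real.sqrt D) * (a*c+ν+lam + Real.sqrt D) = 4*a*c*lam := by
      linear_combination -hs2 - hD
    rw [hα1, hα2, div_mul_div_comm, key]
    field_simp
    ring
  · rw [hA1, hA2, hα1, hα2]; field_simp; ring
  · rw [hA1, hA2, hα1, hα2]; field_simp; ring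

lemma exp_key (θ α x : ℝ) :
    Complex.exp ((Complex.I * θ - α) * x)
      = Complex.exp (Complex.I * θ * x) * (Real.exp (-α * x) : ℂ) := by
  rw [Complex.ofReal_exp, ← Complex.exp_add]
  congr 1
  push_cast
  ring

lemma intIoi (A α θ : ℝ) (hα : 0 < α) :
    (∫ x in Ioi (0:ℝ), (A : ℂ) * Complex.exp ((Complex.I * θ - α) * x))
      = A * ((α : ℂ) - Complex.I * θ)⁻¹ := by
  have hre : ((Complex.I * θ : ℂ) - α).re < 0 := by simp [hα]
  rw [integral_const_mul, myIntegral hre, ← inv_neg, neg_sub]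

lemma intIio (A α θ : ℝ) (hα : α < 0) :
    (∫ x in Iio (0:ℝ), (A : ℂ) * Complex.exp ((Complex.I * θ - α) * x))
      = -(A * ((α : ℂ) - Complex.I * θ)⁻¹) := by
  have hre : 0 < ((Complex.I * θ : ℂ) - α).re := by simp [hα]
  rw [integral_const_mul, myIntegralIio hre,
    show ((α:ℂ) - Complex.I * θ) = -(Complex.I * θ - α) by ring, inv_neg]
  ring

end Helpers

open Set

/-- Example 2.3: inverse Fourier transform of
`θ ↦ (a − iθ)/(aλ − iθ(ac+ν+λ) − cθ²)` in the two cases `c > 0` and `c < 0`. -/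
theorem fourier_compound_poisson_mixture
    (a lam ν c : ℝ) (ha : 0 < a) (hlam : 0 < lam) (hν : 0 < ν) (hc : c ≠ 0)
    (D α1 α2 A1 A2 : ℝ)
    (hD : D = (a * c + ν + lam) ^ 2 - 4 * a * c * lam)
    (hα1 : α1 = (a * c + ν + lam - Real.sqrt D) / (2 * c))
    (hα2 : α2 = (a * c + ν + lam + Real.sqrt D) / (2 * c))
    (hA1 : A1 = (a - α1) / Real.sqrt D)
    (hA2 : A2 = (α2 - a) / Real.sqrt D)
    (F : ℝ → ℝ)
    (hFpos : 0 < c → ∀ x, F x =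
      if 0 < x then A1 * Real.exp (-α1 * x) + A2 * Real.exp (-α2 * x) else 0)
    (hFneg : c < 0 → ∀ x, F x =
      (if 0 < x then A1 * Real.exp (-α1 * x) else 0)
        - (if x < 0 then A2 * Real.exp (-α2 * x) else 0)) :
    ∀ θ : ℝ, ∫ x : ℝ, Complex.exp (Complex.I * θ * x) * (F x : ℂ)
      = ((a : ℂ) - Complex.I * θ)
        / ((a * lam : ℝ) - Complex.I * θ * ((a * c + ν + lam : ℝ) : ℂ)
            - (c : ℂ) * θ ^ 2) := by
  intro θ
  rcases hc.lt_or_gt with hcneg | hcpos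
  · -- c < 0
    have h4 : c * (a * lam) < 0 := mul_neg_of_neg_of_pos hcneg (mul_pos ha hlam)
    have hDpos : 0 < D := by nlinarith [sq_nonneg (a * c + ν + lam)]
    have hsD : |a * c + ν + lam| < Real.sqrt D := by
      rw [← Real.sqrt_sq_eq_abs]
      apply Real.sqrt_lt_sqrt (sq_nonneg _)
      nlinarith
    have hα1pos : 0 < α1 := by
      rw [hα1]
      apply div_pos_of_neg_of_neg
      · cases abs_lt.mp hsD with
        | intro h1 h2 => linarith
      · linarith
    have hα2neg : α2 < 0 := by
      rw [hα2]
      apply div_neg_of_pos_of_neg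
      · cases abs_lt.mp hsD with
        | intro h1 h2 => linarith
      · linarith
    obtain ⟨r1, r2, r3, r4⟩ := real_identities a lam ν c D α1 α2 A1 A2 hD hα1 hα2 hA1 hA2 hc hDpos
    have hptwise : ∀ x : ℝ, Complex.exp (Complex.I * θ * x) * (F x : ℂ)
        = Set.indicator (Ioi 0) (fun x : ℝ => (A1 : ℂ) * Complex.exp ((Complex.I * θ - α1) * x)) x
          - Set.indicator (Iio 0) (fun x : ℝ => (A2 : ℂ) * Complex.exp ((Complex.I * θ - α2) * x)) x := by
      intro x
      rw [hFneg hcneg x]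
      rcases lt_trichotomy x 0 with hx | hx | hx
      · rw [Set.indicator_of_notMem (by simp [hx.le] : x ∉ Ioi 0),
          Set.indicator_of_mem (by exact hx : x ∈ Iio 0), if_neg (by linarith), if_pos hx,
          exp_key]
        push_cast
        ring
      · subst hx; simp
      · rw [Set.indicator_of_mem (by exact hx : x ∈ Ioi 0),
          Set.indicator_of_notMem (by simp [hx.le] : x ∉ Iio 0), if_pos hx,
          if_neg (by linarith), exp_key]
        push_cast
        ring
    rw [integral_congr_ae (Filter.Eventually.of_forall hptwise)]
    have hint1 : Integrable (Set.indicator (Ioi 0)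
        (fun x : ℝ => (A1 : ℂ) * Complex.exp ((Complex.I * θ - α1) * x))) := by
      rw [integrable_indicator_iff measurableSet_Ioi]
      exact (myIntegrable (by simp [hα1pos])).const_mul _
    have hint2 : Integrable (Set.indicator (Iio 0)
        (fun x : ℝ => (A2 : ℂ) * Complex.exp ((Complex.I * θ - α2) * x))) := by
      rw [integrable_indicator_iff measurableSet_Iio]
      exact (myIntegrableIio (by simp [hα2neg])).const_mul _
    rw [integral_sub hint1 hint2, integral_indicator measurableSet_Ioi,
      integral_indicator measurableSet_Iio, intIoi A1 α1 θ hα1pos, intIio A2 α2 θ hα2neg,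
      sub_neg_eq_add]
    exact final_algebra a lam ν c θ α1 α2 A1 A2 r1 r2 r3 r4 hc (ne_of_gt hα1pos) (ne_of_lt hα2neg)
  · -- c > 0
    have hS : 0 < a * c + ν + lam := by positivity
    have hDpos : 0 < D := by nlinarith [sq_nonneg (a * c - lam), mul_pos ha hcpos]
    have hsD : Real.sqrt D < a * c + ν + lam := by
      rw [show a * c + ν + lam = Real.sqrt ((a * c + ν + lam) ^ 2) by
        rw [Real.sqrt_sq hS.le]]
      apply Real.sqrt_lt_sqrt hDpos.le
      nlinarith [mul_pos (mul_pos ha hcpos) hlam]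
    have hα1pos : 0 < α1 := by
      rw [hα1]
      apply div_pos (by linarith) (by linarith)
    have hα2pos : 0 < α2 := by
      rw [hα2]
      have := Real.sqrt_nonneg D
      apply div_pos (by linarith) (by linarith)
    obtain ⟨r1, r2, r3, r4⟩ := real_identities a lam ν c D α1 α2 A1 A2 hD hα1 hα2 hA1 hA2 hc hDpos
    have hptwise : ∀ x : ℝ, Complex.exp (Complex.I * θ * x) * (F x : ℂ)
        = Set.indicator (Ioi 0) (fun x : ℝ => (A1 : ℂ) * Complex.exp ((Complex.I * θ - α1) * x)
            + (A2 : ℂ) * Complex.exp ((Complex.I * θ - α2) * x)) x := by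
      intro x
      rw [hFpos hcpos x]
      by_cases hx : 0 < x
      · rw [Set.indicator_of_mem (by exact hx : x ∈ Ioi 0), if_pos hx, exp_key, exp_key]
        push_cast
        ring
      · rw [Set.indicator_of_notMem (by simpa using hx), if_neg hx]
        simp
    rw [integral_congr_ae (Filter.Eventually.of_forall hptwise),
      integral_indicator measurableSet_Ioi]
    have hint1 : IntegrableOn (fun x : ℝ => (A1 : ℂ) * Complex.exp ((Complex.I * θ - α1) * x))
        (Ioi 0) := (myIntegrable (by simp [hα1pos])).const_mul _
    have hint2 : IntegrableOn (fun x : ℝ => (A2 : ℂ) * Complex.exp ((Complex.I * θ - α2) * x))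
        (Ioi 0) := (myIntegrable (by simp [hα2pos])).const_mul _
    rw [integral_add hint1 hint2, intIoi A1 α1 θ hα1pos, intIoi A2 α2 θ hα2pos]
    exact final_algebra a lam ν c θ α1 α2 A1 A2 r1 r2 r3 r4 hc (ne_of_gt hα1pos) (ne_of_gt hα2pos)
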